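/- Let v, w ∈ ℝⁿ be linearly independent vectors all of whose coordinates are nonnegative, and let a ∈ ℝⁿ. Then the set {(a + s·v) ⊕ (a + t·w) : s, t ≥ 0}, where ⊕ denotes the coordinatewise maximum, contains the image of an injective continuous map from the closed unit square [0,1]² into ℝⁿ (hence a subset homeomorphic to [0,1]²). In particular, any subset of ℝⁿ closed under coordinatewise maximum that contains the two rays {a + s·v : s ≥ 0} and {a + t·w : t ≥ 0} contains a subset homeomorphic to a closed 2-dimensional square. -/
import Mathlib


/-- If `v, w` are linearly independent vectors in `ℝⁿ` with nonnegative
coordinates, then the set of coordinatewise maxima `(a + s·v) ⊔ (a + t·w)`,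
`s, t ≥ 0`, contains the image of an injective continuous map of the closed unit
square, hence a subset homeomorphic to `[0,1]²`. -/
theorem sup_rays_contains_square {n : ℕ} (a v w : Fin n → ℝ)
    (hvw : LinearIndependent ℝ ![v, w])
    (hv : ∀ i, 0 ≤ v i) (hw : ∀ i, 0 ≤ w i) :
    ∃ φ : (ℝ × ℝ) → (Fin n → ℝ),
      ContinuousOn φ (Set.Icc (0:ℝ) 1 ×ˢ Set.Icc (0:ℝ) 1) ∧
      Set.InjOn φ (Set.Icc (0:ℝ) 1 ×ˢ Set.Icc (0:ℝ) 1) ∧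
      φ '' (Set.Icc (0:ℝ) 1 ×ˢ Set.Icc (0:ℝ) 1) ⊆
        {z : Fin n → ℝ | ∃ s t : ℝ, 0 ≤ s ∧ 0 ≤ t ∧
          z = (a + s • v) ⊔ (a + t • w)} := by
  -- Find coordinates witnessing linear independence
  obtain ⟨i, j, hij⟩ : ∃ i j, v j * w i < v i * w j := by
    by_contra h
    push_neg at h
    have heq : ∀ i j, v i * w j = v j * w i := fun i j => le_antisymm (h i j) (h j i)
    rw [LinearIndependent.pair_iff] at hvw
    by_cases hw0 : w = 0
    · have := (hvw 0 1 (by simp [hw0])).2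
      exact one_ne_zero this
    · obtain ⟨k, hk⟩ := Function.ne_iff.mp hw0
      simp only [Pi.zero_apply] at hk
      have hrel : (w k) • v + (-(v k)) • w = 0 := by
        funext m
        simp only [Pi.add_apply, Pi.smul_apply, smul_eq_mul, Pi.zero_apply]
        nlinarith [heq m k]
      exact hk ((hvw _ _ hrel).1)
  have hprod : 0 < v i * w j := lt_of_le_of_lt (mul_nonneg (hv j) (hw i)) hij
  have hvi : 0 < v i := by
    rcases (hv i).lt_or_eq with h | h
    · exact h
    · exfalso; rw [← h] at hprod; simp at hprod
  have hwj : 0 < w j := by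
    rcases (hw j).lt_or_eq with h | h
    · exact h
    · exfalso; rw [← h] at hprod; simp at hprod
  set c : ℝ := (w i + w j) / (v i + v j) with hc
  have hd : 0 < v i + v j := by nlinarith [hv j]
  have hc0 : 0 < c := div_pos (by nlinarith [hw i]) hd
  have hc1 : w i < c * v i := by
    rw [hc, div_mul_eq_mul_div, lt_div_iff₀ hd]
    nlinarith
  have hc2 : c * v j < w j := by
    rw [hc, div_mul_eq_mul_div, div_lt_iff₀ hd]
    nlinarith
  set T : ℝ := w i / (c * v i - w i) + c * v j / (w j - c * v j) with hT
  have hT0 : 0 ≤ T :=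
    add_nonneg (div_nonneg (hw i) (by linarith))
      (div_nonneg (mul_nonneg hc0.le (hv j)) (by linarith))
  have hTA : w i ≤ T * (c * v i - w i) := by
    have h1 : w i / (c * v i - w i) ≤ T :=
      le_add_of_nonneg_right (div_nonneg (mul_nonneg hc0.le (hv j)) (by linarith))
    exact (div_le_iff₀ (by linarith)).mp h1
  have hTB : c * v j ≤ T * (w j - c * v j) := by
    have h1 : c * v j / (w j - c * v j) ≤ T :=
      le_add_of_nonneg_left (div_nonneg (hw i) (by linarith))
    exact (div_le_iff₀ (by linarith)).mp h1
  have keyi : ∀ x y : ℝ, 0 ≤ x → y ≤ 1 → (T + y) * w i ≤ c * (T + x) * v i := by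
    intro x y hx hy
    nlinarith [hTA, mul_nonneg (mul_nonneg hc0.le (hv i)) hx,
      mul_le_of_le_one_left (hw i) hy]
  have keyj : ∀ x y : ℝ, x ≤ 1 → 0 ≤ y → c * (T + x) * v j ≤ (T + y) * w j := by
    intro x y hx hy
    nlinarith [hTB, mul_le_of_le_one_left (mul_nonneg hc0.le (hv j)) hx,
      mul_nonneg hy (hw j)]
  refine ⟨fun p => (a + (c * (T + p.1)) • v) ⊔ (a + (T + p.2) • w), ?_, ?_, ?_⟩
  · apply Continuous.continuousOn
    apply continuous_pi
    intro k
    simp only [Pi.sup_apply, Pi.add_apply, Pi.smul_apply, smul_eq_mul]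
    exact Continuous.max
      (continuous_const.add ((continuous_const.mul (continuous_const.add continuous_fst)).mul
        continuous_const))
      (continuous_const.add ((continuous_const.add continuous_snd).mul continuous_const))
  · rintro ⟨x, y⟩ hp ⟨x', y'⟩ hq hφ
    simp only [Set.mem_prod, Set.mem_Icc] at hp hq
    obtain ⟨⟨hx0, hx1⟩, hy0, hy1⟩ := hp
    obtain ⟨⟨hx0', hx1'⟩, hy0', hy1'⟩ := hq
    have hi := congrFun hφ i
    have hj := congrFun hφ j
    simp only [Pi.sup_apply, Pi.add_apply, Pi.smul_apply, smul_eq_mul] at hi hj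
    rw [sup_eq_left.mpr (by have := keyi x y hx0 hy1; linarith),
        sup_eq_left.mpr (by have := keyi x' y' hx0' hy1'; linarith)] at hi
    rw [sup_eq_right.mpr (by have := keyj x y hx1 hy0; linarith),
        sup_eq_right.mpr (by have := keyj x' y' hx1' hy0'; linarith)] at hj
    have h2 : (c * v i) * (T + x) = (c * v i) * (T + x') := by linear_combination hi
    have hxx : x = x' := by
      have := mul_left_cancel₀ (ne_of_gt (mul_pos hc0 hvi)) h2
      linarith
    have h3 : (w j) * (T + y) = (w j) * (T + y') := by linear_combination hj
    have hyy : y = y' := by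
      have := mul_left_cancel₀ (ne_of_gt hwj) h3
      linarith
    exact Prod.ext hxx hyy
  · rintro z ⟨⟨x, y⟩, hp, rfl⟩
    simp only [Set.mem_prod, Set.mem_Icc] at hp
    exact ⟨c * (T + x), T + y, mul_nonneg hc0.le (by linarith [hp.1.1]),
      by linarith [hp.2.1], rfl⟩
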